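/- Let m₁,…,m_r be positive integers (r ≥ 2). The affine variety in ℂ^r defined by the system x₁^{m₁}+x₂^{m₂} = 0, x₂^{m₂}+x₃^{m₃} = 0, …, x_{r-1}^{m_{r-1}}+x_r^{m_r} = 0 has exactly m₁m₂⋯m_r / lcm(m₁,…,m_r) irreducible components. -/

import Mathlib

open PrimeSpectrum

namespace ChainedAux

lemma mem_irredComp_image {X Y : Type*} [TopologicalSpace X] [TopologicalSpace Y]
    (e : X ≃ₜ Y) {s : Set X} (hs : s ∈ irreducibleComponents X) :
    e '' s ∈ irreducibleComponents Y := by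
  refine ⟨hs.1.image e e.continuous.continuousOn, fun t ht hle => ?_⟩
  have h1 : s ⊆ e.symm '' t := fun x hx => ⟨e x, hle ⟨x, hx, rfl⟩, e.symm_apply_apply x⟩
  have h2 : e.symm '' t ⊆ s := hs.2 (ht.image e.symm e.symm.continuous.continuousOn) h1
  intro y hy
  obtain ⟨x, hx, rfl⟩ : y ∈ e '' (e.symm '' t) := by
    refine ⟨e.symm y, ⟨y, hy, rfl⟩, e.apply_symm_apply y⟩
  exact ⟨x, h2 hx, rfl⟩

noncomputable def irredCompEquiv {X Y : Type*} [TopologicalSpace X] [TopologicalSpace Y]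
    (e : X ≃ₜ Y) : irreducibleComponents X ≃ irreducibleComponents Y where
  toFun s := ⟨e '' s.1, mem_irredComp_image e s.2⟩
  invFun t := ⟨e.symm '' t.1, mem_irredComp_image e.symm t.2⟩
  left_inv s := Subtype.ext (by ext x; simp)
  right_inv t := Subtype.ext (by ext y; simp)

lemma card_irredComp_zeroLocus {R : Type*} [CommRing R] (I : Ideal R) :
    Nat.card (irreducibleComponents ↥(zeroLocus (I : Set R))) = Nat.card I.minimalPrimes := by
  have hsurj : Function.Surjective (Ideal.Quotient.mk I) := Ideal.Quotient.mk_surjective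
  have hemb := (PrimeSpectrum.isClosedEmbedding_comap_of_surjective _ _ hsurj).toIsEmbedding
  have hrange : Set.range (comap (Ideal.Quotient.mk I)) = zeroLocus (I : Set R) := by
    rw [range_comap_of_surjective _ _ hsurj, Ideal.mk_ker]
  let e : PrimeSpectrum (R ⧸ I) ≃ₜ ↥(zeroLocus (I : Set R)) :=
    hemb.toHomeomorph.trans (Homeomorph.setCongr hrange)
  have hinj : Function.Injective (Ideal.comap (Ideal.Quotient.mk I) :
      Ideal (R ⧸ I) → Ideal R) := Ideal.comap_injective_of_surjective _ hsurj
  calc Nat.card (irreducibleComponents ↥(zeroLocus (I : Set R)))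
      = Nat.card (irreducibleComponents (PrimeSpectrum (R ⧸ I))) :=
        (Nat.card_congr (irredCompEquiv e)).symm
    _ = Nat.card (minimalPrimes (R ⧸ I)) :=
        (Nat.card_congr ((minimalPrimes.equivIrreducibleComponents (R ⧸ I)).toEquiv.trans
          OrderDual.ofDual)).symm
    _ = Nat.card I.minimalPrimes := by
        rw [Ideal.minimalPrimes_eq_comap]
        exact Nat.card_congr (Equiv.Set.image _ _ hinj)



open Polynomial
noncomputable section

variable {r : ℕ}

/-- The generating set of chained binomials. -/
def Sgen (r : ℕ) (m : Fin r → ℕ) : Set (MvPolynomial (Fin r) ℂ) :=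
  {p | ∃ (i : ℕ) (h : i + 1 < r),
    p = MvPolynomial.X (⟨i, Nat.lt_of_succ_lt h⟩ : Fin r) ^ m ⟨i, Nat.lt_of_succ_lt h⟩
      + MvPolynomial.X (⟨i + 1, h⟩ : Fin r) ^ m ⟨i + 1, h⟩}

def LL (m : Fin r → ℕ) : ℕ := Finset.univ.lcm m

def cc (m : Fin r → ℕ) (i : Fin r) : ℕ := LL m / m i

lemma hmc {m : Fin r → ℕ} (hm : ∀ i, 0 < m i) (i : Fin r) : m i * cc m i = LL m :=
  Nat.mul_div_cancel' (Finset.dvd_lcm (Finset.mem_univ i))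

lemma LL_pos {m : Fin r → ℕ} (hm : ∀ i, 0 < m i) : 0 < LL m := by
  rw [Nat.pos_iff_ne_zero]
  intro h
  rw [LL, Finset.lcm_eq_zero_iff] at h
  obtain ⟨i, -, hi⟩ := h
  exact (hm i).ne' hi

lemma cc_pos {m : Fin r → ℕ} (hm : ∀ i, 0 < m i) (i : Fin r) : 0 < cc m i :=
  Nat.div_pos (Nat.le_of_dvd (LL_pos hm) (Finset.dvd_lcm (Finset.mem_univ i))) (hm i)

/-- evaluation onto the monomial curve `t ↦ (ζ i • t ^ c i)`. -/
def ev (m : Fin r → ℕ) (ζ : Fin r → ℂ) : MvPolynomial (Fin r) ℂ →ₐ[ℂ] Polynomial ℂ :=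
  MvPolynomial.aeval (fun i => Polynomial.C (ζ i) * Polynomial.X ^ cc m i)

def P (m : Fin r → ℕ) (ζ : Fin r → ℂ) : Ideal (MvPolynomial (Fin r) ℂ) := RingHom.ker (ev m ζ)

def Sol (m : Fin r → ℕ) (ζ : Fin r → ℂ) : Prop :=
  ∀ (i : ℕ) (h : i + 1 < r),
    ζ ⟨i, Nat.lt_of_succ_lt h⟩ ^ m ⟨i, Nat.lt_of_succ_lt h⟩ + ζ ⟨i + 1, h⟩ ^ m ⟨i + 1, h⟩ = 0

variable {m : Fin r → ℕ}

lemma ev_X (ζ : Fin r → ℂ) (i : Fin r) :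
    ev m ζ (MvPolynomial.X i) = Polynomial.C (ζ i) * Polynomial.X ^ cc m i :=
  MvPolynomial.aeval_X _ i

lemma ev_X_pow_m (hm : ∀ i, 0 < m i) (ζ : Fin r → ℂ) (i : Fin r) :
    ev m ζ (MvPolynomial.X i ^ m i) = Polynomial.C (ζ i ^ m i) * Polynomial.X ^ LL m := by
  rw [map_pow, ev_X, mul_pow, ← Polynomial.C_pow, ← pow_mul, Nat.mul_comm, hmc hm]

lemma P_isPrime (ζ : Fin r → ℂ) : (P m ζ).IsPrime := RingHom.ker_isPrime _

lemma mem_P {ζ : Fin r → ℂ} {f : MvPolynomial (Fin r) ℂ} : f ∈ P m ζ ↔ ev m ζ f = 0 :=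
  RingHom.mem_ker

lemma span_le_P (hm : ∀ i, 0 < m i) {ζ : Fin r → ℂ} (hζ : Sol m ζ) :
    Ideal.span (Sgen r m) ≤ P m ζ := by
  rw [Ideal.span_le]
  rintro p ⟨i, h, rfl⟩
  show ev m ζ _ = 0
  rw [map_add, ev_X_pow_m hm, ev_X_pow_m hm, ← add_mul, ← Polynomial.C_add, hζ i h,
    Polynomial.C_0, zero_mul]

lemma X_not_mem_P {ζ : Fin r → ℂ} {i : Fin r} (hζ : ζ i ≠ 0) :
    MvPolynomial.X i ∉ P m ζ := by
  intro h
  have h' : Polynomial.C (ζ i) * Polynomial.X ^ cc m i = 0 := by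
    rw [← ev_X (m := m)]; exact h
  rcases mul_eq_zero.mp h' with h'' | h''
  · exact hζ (Polynomial.C_eq_zero.mp h'')
  · exact pow_ne_zero _ Polynomial.X_ne_zero h''

/-- rescaling the parameter does not change the kernel. -/
lemma P_scale {ζ : Fin r → ℂ} {l : ℂ} (hl : l ≠ 0) :
    P m (fun i => ζ i * l ^ cc m i) = P m ζ := by
  set A : Polynomial ℂ →ₐ[ℂ] Polynomial ℂ := Polynomial.aeval (Polynomial.C l * Polynomial.X)
    with hA
  have hAX : A Polynomial.X = Polynomial.C l * Polynomial.X := Polynomial.aeval_X _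
  have hAC : ∀ z : ℂ, A (Polynomial.C z) = Polynomial.C z := fun z => by
    rw [hA, Polynomial.aeval_C, Polynomial.algebraMap_eq]
  have hAinj : Function.Injective A := by
    have hcomp : ((Polynomial.aeval (Polynomial.C l⁻¹ * Polynomial.X) : Polynomial ℂ →ₐ[ℂ]
        Polynomial ℂ).comp A) = AlgHom.id ℂ (Polynomial ℂ) := by
      apply Polynomial.algHom_ext
      rw [AlgHom.comp_apply, Polynomial.aeval_X, map_mul, Polynomial.aeval_X, Polynomial.aeval_C,
        Polynomial.algebraMap_eq, ← mul_assoc, ← Polynomial.C_mul, mul_inv_cancel₀ hl,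
        Polynomial.C_1, one_mul, AlgHom.id_apply]
    intro x y hxy
    have h2 := congrArg (Polynomial.aeval (Polynomial.C l⁻¹ * Polynomial.X) :
      Polynomial ℂ →ₐ[ℂ] Polynomial ℂ) hxy
    rwa [← AlgHom.comp_apply, ← AlgHom.comp_apply, hcomp, AlgHom.id_apply, AlgHom.id_apply] at h2
  have hAcomp : (A.comp (ev m ζ) : MvPolynomial (Fin r) ℂ →ₐ[ℂ] Polynomial ℂ)
      = ev m (fun i => ζ i * l ^ cc m i) := by
    apply MvPolynomial.algHom_ext
    intro i
    rw [AlgHom.comp_apply, ev_X, ev_X, map_mul, map_pow, hAX, hAC, mul_pow,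
      ← Polynomial.C_pow, ← mul_assoc, ← Polynomial.C_mul]
  have hker : RingHom.ker (A.comp (ev m ζ)) = RingHom.ker (ev m ζ) := by
    ext f
    simp only [RingHom.mem_ker, AlgHom.comp_apply]
    exact ⟨fun h => hAinj (by rw [h, map_zero]), fun h => by rw [h, map_zero]⟩
  rw [P, ← hAcomp, hker, P]

lemma chain_pow (hr : 0 < r) (i : ℕ) (h : i < r) :
    MvPolynomial.X (⟨i, h⟩ : Fin r) ^ m ⟨i, h⟩
      - (-1 : MvPolynomial (Fin r) ℂ) ^ i * MvPolynomial.X (⟨0, hr⟩ : Fin r) ^ m ⟨0, hr⟩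
      ∈ Ideal.span (Sgen r m) := by
  induction i with
  | zero => simpa using Ideal.zero_mem _
  | succ n ih =>
      have hn : n < r := Nat.lt_of_succ_lt h
      have hgen : MvPolynomial.X (⟨n, hn⟩ : Fin r) ^ m ⟨n, hn⟩
          + MvPolynomial.X (⟨n + 1, h⟩ : Fin r) ^ m ⟨n + 1, h⟩ ∈ Sgen r m := ⟨n, h, rfl⟩
      have heq : MvPolynomial.X (⟨n + 1, h⟩ : Fin r) ^ m ⟨n + 1, h⟩
          - (-1 : MvPolynomial (Fin r) ℂ) ^ (n + 1)
            * MvPolynomial.X (⟨0, hr⟩ : Fin r) ^ m ⟨0, hr⟩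
          = (MvPolynomial.X (⟨n, hn⟩ : Fin r) ^ m ⟨n, hn⟩
              + MvPolynomial.X (⟨n + 1, h⟩ : Fin r) ^ m ⟨n + 1, h⟩)
            - (MvPolynomial.X (⟨n, hn⟩ : Fin r) ^ m ⟨n, hn⟩
              - (-1 : MvPolynomial (Fin r) ℂ) ^ n
                * MvPolynomial.X (⟨0, hr⟩ : Fin r) ^ m ⟨0, hr⟩) := by
        ring
      rw [heq]
      exact Ideal.sub_mem _ (Ideal.subset_span hgen) (ih hn)


/-- primitive `m i`-th root of unity. -/
def om (m : Fin r → ℕ) (i : Fin r) : ℂ := Complex.exp (2 * Real.pi * Complex.I / m i)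

/-- primitive `L`-th root of unity. -/
def lam (m : Fin r → ℕ) : ℂ := Complex.exp (2 * Real.pi * Complex.I / LL m)

lemma om_prim (hm : ∀ i, 0 < m i) (i : Fin r) : IsPrimitiveRoot (om m i) (m i) := by
  simpa [om, mul_comm] using Complex.isPrimitiveRoot_exp (m i) (hm i).ne'

lemma lam_prim (hm : ∀ i, 0 < m i) : IsPrimitiveRoot (lam m) (LL m) := by
  simpa [lam, mul_comm] using Complex.isPrimitiveRoot_exp (LL m) (LL_pos hm).ne'

lemma om_pow_m (hm : ∀ i, 0 < m i) (i : Fin r) : om m i ^ m i = 1 := (om_prim hm i).pow_eq_one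

lemma lam_pow_cc (hm : ∀ i, 0 < m i) (i : Fin r) : lam m ^ cc m i = om m i := by
  rw [lam, om, ← Complex.exp_nat_mul]
  congr 1
  have h1 : (m i : ℂ) ≠ 0 := Nat.cast_ne_zero.mpr (hm i).ne'
  have h2 : (LL m : ℂ) ≠ 0 := Nat.cast_ne_zero.mpr (LL_pos hm).ne'
  field_simp
  exact_mod_cast (Nat.mul_comm _ _).trans (hmc hm i)

lemma lam_ne_zero : lam m ≠ 0 := Complex.exp_ne_zero _

lemma om_ne_zero (i : Fin r) : om m i ≠ 0 := Complex.exp_ne_zero _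

/-- powers of a root of unity only depend on exponent mod `n`. -/
lemma pow_mod_eq {F : Type*} [Monoid F] {z : F} {n : ℕ} (h1 : z ^ n = 1) (k : ℕ) :
    z ^ (k % n) = z ^ k := by
  conv_rhs => rw [← Nat.mod_add_div k n]
  rw [pow_add, pow_mul, h1, one_pow, mul_one]

lemma pow_val_natCast {F : Type*} [Monoid F] {z : F} {n : ℕ} (hn : 0 < n) (h1 : z ^ n = 1)
    (k : ℕ) : z ^ ((k : ZMod n)).val = z ^ k := by
  haveI : NeZero n := ⟨hn.ne'⟩
  rw [ZMod.val_natCast, pow_mod_eq h1]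

lemma pow_val_add {F : Type*} [Monoid F] {z : F} {n : ℕ} (hn : 0 < n) (h1 : z ^ n = 1)
    (x y : ZMod n) : z ^ (x + y).val = z ^ x.val * z ^ y.val := by
  haveI : NeZero n := ⟨hn.ne'⟩
  rw [ZMod.val_add, pow_mod_eq h1, pow_add]

/-- the parametrized family of solutions. -/
def zf (m : Fin r → ℕ) (z0 : Fin r → ℂ) (a : ∀ i, ZMod (m i)) : Fin r → ℂ :=
  fun i => z0 i * om m i ^ (a i).val

lemma zf_ne_zero (hm : ∀ i, 0 < m i) {z0 : Fin r → ℂ}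
    (hz0 : ∀ i, z0 i ^ m i = (-1 : ℂ) ^ (i : ℕ))
    (a : ∀ i, ZMod (m i)) (i : Fin r) : zf m z0 a i ≠ 0 := by
  have h1 : z0 i ^ m i ≠ 0 := by rw [hz0 i]; exact pow_ne_zero _ (by norm_num)
  have h0 : z0 i ≠ 0 := fun h => h1 (by rw [h, zero_pow (hm i).ne'])
  exact mul_ne_zero h0 (pow_ne_zero _ (om_ne_zero i))

lemma zf_pow_m (hm : ∀ i, 0 < m i) {z0 : Fin r → ℂ} (hz0 : ∀ i, z0 i ^ m i = (-1 : ℂ) ^ (i : ℕ))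
    (a : ∀ i, ZMod (m i)) (i : Fin r) : zf m z0 a i ^ m i = (-1 : ℂ) ^ (i : ℕ) := by
  rw [zf, mul_pow, ← pow_mul, mul_comm ((a i).val), pow_mul, om_pow_m hm, one_pow, mul_one,
    hz0 i]


lemma Sol_zf (hm : ∀ i, 0 < m i) {z0 : Fin r → ℂ}
    (hz0 : ∀ i, z0 i ^ m i = (-1 : ℂ) ^ (i : ℕ)) (a : ∀ i, ZMod (m i)) :
    Sol m (zf m z0 a) := by
  intro i h
  rw [zf_pow_m hm hz0, zf_pow_m hm hz0]
  show (-1 : ℂ) ^ i + (-1 : ℂ) ^ (i + 1) = 0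
  rw [pow_succ]
  ring

lemma zf_shift (hm : ∀ i, 0 < m i) {z0 : Fin r → ℂ} (a : ∀ i, ZMod (m i)) (k : ℕ) :
    zf m z0 (a + k • fun i => (1 : ZMod (m i)))
      = fun i => zf m z0 a i * (lam m ^ k) ^ cc m i := by
  funext i
  have h1 : om m i ^ m i = 1 := om_pow_m hm i
  have h2 : (lam m ^ k) ^ cc m i = om m i ^ k := by
    rw [← pow_mul, mul_comm, pow_mul, lam_pow_cc hm i]
  have h3 : (a + k • fun i => (1 : ZMod (m i))) i = a i + (k : ZMod (m i)) := by
    simp [nsmul_eq_mul]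
  show z0 i * om m i ^ ((a + k • fun i => (1 : ZMod (m i))) i).val = _
  rw [h3, pow_val_add (hm i) h1, pow_val_natCast (hm i) h1, h2]
  show z0 i * (om m i ^ (a i).val * om m i ^ k) = z0 i * om m i ^ (a i).val * om m i ^ k
  ring

lemma P_zf_shift (hm : ∀ i, 0 < m i) {z0 : Fin r → ℂ} (a : ∀ i, ZMod (m i)) (k : ℕ) :
    P m (zf m z0 (a + k • fun i => (1 : ZMod (m i)))) = P m (zf m z0 a) := by
  rw [zf_shift hm a k]
  exact P_scale (pow_ne_zero _ lam_ne_zero)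

lemma P_zf_eq_of_sub_mem (hm : ∀ i, 0 < m i) {z0 : Fin r → ℂ} {a b : ∀ i, ZMod (m i)}
    (h : b - a ∈ AddSubgroup.zmultiples (fun i => (1 : ZMod (m i)))) :
    P m (zf m z0 b) = P m (zf m z0 a) := by
  obtain ⟨k, hk⟩ := h
  have hLpos : (0 : ℤ) < (LL m : ℤ) := by exact_mod_cast LL_pos hm
  set k' : ℕ := (k % (LL m : ℤ)).toNat with hk'def
  have hk'cast : ∀ i : Fin r, ((k' : ℕ) : ZMod (m i)) = ((k : ℤ) : ZMod (m i)) := by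
    intro i
    have hL0 : ((LL m : ℕ) : ZMod (m i)) = 0 :=
      (ZMod.natCast_eq_zero_iff _ _).mpr (Finset.dvd_lcm (Finset.mem_univ i))
    have h1 : ((k' : ℕ) : ℤ) = k % (LL m : ℤ) := Int.toNat_of_nonneg (Int.emod_nonneg k hLpos.ne')
    have h2 : ((k % (LL m : ℤ) : ℤ) : ZMod (m i)) = ((k : ℤ) : ZMod (m i)) := by
      rw [Int.emod_def]
      push_cast
      rw [hL0]
      ring
    rw [← h2, ← h1]
    push_cast
    rfl
  have hb : b = a + k' • fun i => (1 : ZMod (m i)) := by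
    funext i
    have h4 : b i - a i = (k : ℤ) • (1 : ZMod (m i)) := by
      have := congrFun hk i
      simpa using this.symm
    have h5 : b i = a i + ((k : ℤ) : ZMod (m i)) := by
      rw [← zsmul_one ((k : ℤ)) , ← h4]; ring
    rw [h5, ← hk'cast i]
    simp [nsmul_eq_mul]
  rw [hb, P_zf_shift hm a k']

lemma X_mem_all (hm : ∀ i, 0 < m i) (hr : 0 < r) {p : Ideal (MvPolynomial (Fin r) ℂ)}
    (hp : p.IsPrime) (hIp : Ideal.span (Sgen r m) ≤ p) {i : Fin r}
    (hi : MvPolynomial.X i ∈ p) (j : Fin r) : MvPolynomial.X j ∈ p := by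
  have hchain : ∀ i : Fin r, MvPolynomial.X i ^ m i
      - (-1 : MvPolynomial (Fin r) ℂ) ^ (i : ℕ)
        * MvPolynomial.X (⟨0, hr⟩ : Fin r) ^ m ⟨0, hr⟩ ∈ p :=
    fun i => hIp (chain_pow hr i.1 i.2)
  have hXi_pow : MvPolynomial.X i ^ m i ∈ p := Ideal.pow_mem_of_mem p hi _ (hm i)
  have h1 : (-1 : MvPolynomial (Fin r) ℂ) ^ (i : ℕ)
      * MvPolynomial.X (⟨0, hr⟩ : Fin r) ^ m ⟨0, hr⟩ ∈ p := by
    have h := Ideal.sub_mem p hXi_pow (hchain i)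
    simpa using h
  have h0 : MvPolynomial.X (⟨0, hr⟩ : Fin r) ^ m ⟨0, hr⟩ ∈ p := by
    have h2 := Ideal.mul_mem_left p ((-1 : MvPolynomial (Fin r) ℂ) ^ (i : ℕ)) h1
    rwa [← mul_assoc, ← pow_add, Even.neg_one_pow ⟨(i : ℕ), rfl⟩, one_mul] at h2
  have hj : MvPolynomial.X j ^ m j ∈ p := by
    have h3 := Ideal.add_mem p (hchain j)
      (Ideal.mul_mem_left p ((-1 : MvPolynomial (Fin r) ℂ) ^ (j : ℕ)) h0)
    simpa using h3
  exact hp.mem_of_pow_mem _ hj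

lemma P_le_span_X (hm : ∀ i, 0 < m i) (ζ : Fin r → ℂ) :
    P m ζ ≤ Ideal.span (Set.range (MvPolynomial.X : Fin r → MvPolynomial (Fin r) ℂ)) := by
  intro f hf
  have key : ∀ g : MvPolynomial (Fin r) ℂ,
      g - MvPolynomial.C (MvPolynomial.eval (0 : Fin r → ℂ) g)
        ∈ Ideal.span (Set.range (MvPolynomial.X : Fin r → MvPolynomial (Fin r) ℂ)) := by
    intro g
    induction g using MvPolynomial.induction_on with
    | C a => simpa using Ideal.zero_mem _
    | add f g hf' hg' =>
        have h := Ideal.add_mem _ hf' hg'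
        rw [map_add, map_add, add_sub_add_comm] at *
        exact h
    | mul_X f i hf' =>
        have h0 : MvPolynomial.eval (0 : Fin r → ℂ) (f * MvPolynomial.X i) = 0 := by simp
        rw [h0, map_zero, sub_zero]
        exact Ideal.mul_mem_left _ _ (Ideal.subset_span ⟨i, rfl⟩)
  have hcomp : ∀ g, Polynomial.eval (0 : ℂ) (ev m ζ g) = MvPolynomial.eval (0 : Fin r → ℂ) g := by
    intro g
    induction g using MvPolynomial.induction_on with
    | C a => simp [ev]
    | add f g hf' hg' => simp [map_add, hf', hg']
    | mul_X f i hf' => simp [map_mul, hf', ev_X, zero_pow (cc_pos hm i).ne']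
  have h0 : MvPolynomial.eval (0 : Fin r → ℂ) f = 0 := by
    rw [← hcomp f, show ev m ζ f = 0 from hf, Polynomial.eval_zero]
  have h := key f
  rwa [h0, map_zero, sub_zero] at h

lemma cover_aux (hm : ∀ i, 0 < m i) (hr : 0 < r) {z0 : Fin r → ℂ}
    (hz0 : ∀ i, z0 i ^ m i = (-1 : ℂ) ^ (i : ℕ))
    {p : Ideal (MvPolynomial (Fin r) ℂ)} (hp : p.IsPrime)
    (hIp : Ideal.span (Sgen r m) ≤ p)
    (hX0 : MvPolynomial.X (⟨0, hr⟩ : Fin r) ∉ p)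
    {F : Type} [Field F] [IsAlgClosed F] (φ : MvPolynomial (Fin r) ℂ →+* F)
    (hφiff : ∀ f, φ f = 0 ↔ f ∈ p) :
    ∃ a : ∀ i, ZMod (m i), P m (zf m z0 a) ≤ p := by
  have hφinj : ∀ f, φ f = 0 → f ∈ p := fun f => (hφiff f).mp
  have hφmem : ∀ f : MvPolynomial (Fin r) ℂ, f ∈ p → φ f = 0 := fun f => (hφiff f).mpr
  set ι : ℂ →+* F := φ.comp MvPolynomial.C with hι
  have hιinj : Function.Injective ι := ι.injective
  have hι0 : ∀ x : ℂ, ι x ≠ 0 ↔ x ≠ 0 := fun x =>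
    not_congr ⟨fun h => hιinj (by rw [h, map_zero]), fun h => by rw [h, map_zero]⟩
  set u : Fin r → F := fun i => φ (MvPolynomial.X i) with hu
  have hXj : ∀ j : Fin r, MvPolynomial.X j ∉ p := fun j hj => hX0 (X_mem_all hm hr hp hIp hj _)
  have hu0 : ∀ j, u j ≠ 0 := fun j h => hXj j (hφinj _ h)
  have hchain : ∀ i : Fin r,
      u i ^ m i = ι ((-1 : ℂ) ^ (i : ℕ)) * u ⟨0, hr⟩ ^ m ⟨0, hr⟩ := by
    intro i
    have h := hφmem _ (hIp (chain_pow (m := m) hr i.1 i.2))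
    rw [map_sub, sub_eq_zero] at h
    have hneg : ((-1 : MvPolynomial (Fin r) ℂ)) ^ (i : ℕ)
        = MvPolynomial.C ((-1 : ℂ) ^ (i : ℕ)) := by
      rw [map_pow, map_neg, map_one]
    calc u i ^ m i = φ (MvPolynomial.X i ^ m i) := by rw [map_pow]
      _ = φ ((-1) ^ (i : ℕ) * MvPolynomial.X ⟨0, hr⟩ ^ m ⟨0, hr⟩) := by convert h using 2
      _ = ι ((-1 : ℂ) ^ (i : ℕ)) * u ⟨0, hr⟩ ^ m ⟨0, hr⟩ := by
          rw [hneg, map_mul, map_pow φ]; rfl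
  obtain ⟨τ, hτ⟩ := IsAlgClosed.exists_pow_nat_eq (u ⟨0, hr⟩ ^ m ⟨0, hr⟩) (LL_pos hm)
  have hτ0 : τ ≠ 0 := by
    intro h
    rw [h, zero_pow (LL_pos hm).ne'] at hτ
    exact hu0 ⟨0, hr⟩ (pow_eq_zero_iff (hm _).ne' |>.mp hτ.symm)
  have hm1ne : ∀ i : Fin r, ((-1 : ℂ) ^ (i : ℕ)) ≠ 0 :=
    fun i => pow_ne_zero _ (by norm_num)
  have hz0ne : ∀ i, ι (z0 i) ≠ 0 := by
    intro i
    rw [hι0]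
    intro h1
    have h2 := hz0 i
    rw [h1, zero_pow (hm i).ne'] at h2
    exact hm1ne i h2.symm
  set ρ : Fin r → F := fun i => u i / (ι (z0 i) * τ ^ cc m i) with hρ
  have hρpow : ∀ i, ρ i ^ m i = 1 := by
    intro i
    have e2 : (τ ^ cc m i) ^ m i = u ⟨0, hr⟩ ^ m ⟨0, hr⟩ := by
      rw [← pow_mul, mul_comm (cc m i), hmc hm i, hτ]
    show (u i / (ι (z0 i) * τ ^ cc m i)) ^ m i = 1
    rw [div_pow, hchain i, mul_pow, ← map_pow ι, hz0 i, e2]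
    exact div_self (mul_ne_zero ((hι0 _).mpr (hm1ne i)) (pow_ne_zero _ (hu0 _)))
  have hprim : ∀ i : Fin r, IsPrimitiveRoot (ι (om m i)) (m i) :=
    fun i => (om_prim hm i).map_of_injective hιinj
  have hchoice : ∀ i : Fin r, ∃ k, k < m i ∧ (ι (om m i)) ^ k = ρ i := by
    intro i
    haveI : NeZero (m i) := ⟨(hm i).ne'⟩
    obtain ⟨k, hk1, hk2⟩ := (hprim i).eq_pow_of_pow_eq_one (hρpow i)
    exact ⟨k, hk1, hk2⟩
  choose kk hkk1 hkk2 using hchoice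
  set a : ∀ i, ZMod (m i) := fun i => (kk i : ZMod (m i)) with ha
  have hfact : ∀ i, ι (zf m z0 a i) * τ ^ cc m i = u i := by
    intro i
    have h1 : om m i ^ (a i).val = om m i ^ kk i := pow_val_natCast (hm i) (om_pow_m hm i) _
    show ι (z0 i * om m i ^ (a i).val) * τ ^ cc m i = u i
    rw [h1, map_mul, map_pow, hkk2 i]
    show ι (z0 i) * (u i / (ι (z0 i) * τ ^ cc m i)) * τ ^ cc m i = u i
    have hden : ι (z0 i) * τ ^ cc m i ≠ 0 := mul_ne_zero (hz0ne i) (pow_ne_zero _ hτ0)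
    have hrw : ι (z0 i) * (u i / (ι (z0 i) * τ ^ cc m i)) * τ ^ cc m i
        = (u i * (ι (z0 i) * τ ^ cc m i)) / (ι (z0 i) * τ ^ cc m i) := by ring
    rw [hrw, mul_div_cancel_right₀ _ hden]
  refine ⟨a, ?_⟩
  intro f hf
  have hev : ev m (zf m z0 a) f = 0 := mem_P.mp hf
  have hcomp : φ = (Polynomial.eval₂RingHom ι τ).comp
      (ev m (zf m z0 a) : MvPolynomial (Fin r) ℂ →+* Polynomial ℂ) := by
    apply MvPolynomial.ringHom_ext
    · intro z
      rw [RingHom.comp_apply]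
      show ι z = _
      have : (ev m (zf m z0 a) : MvPolynomial (Fin r) ℂ →+* Polynomial ℂ) (MvPolynomial.C z)
          = Polynomial.C z := by
        show ev m (zf m z0 a) (MvPolynomial.C z) = Polynomial.C z
        rw [ev, MvPolynomial.aeval_C, Polynomial.algebraMap_eq]
      rw [this]
      rw [Polynomial.coe_eval₂RingHom, Polynomial.eval₂_C]
    · intro i
      rw [RingHom.comp_apply]
      show u i = _
      have : (ev m (zf m z0 a) : MvPolynomial (Fin r) ℂ →+* Polynomial ℂ) (MvPolynomial.X i)
          = Polynomial.C (zf m z0 a i) * Polynomial.X ^ cc m i := ev_X _ i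
      rw [this, Polynomial.coe_eval₂RingHom, Polynomial.eval₂_mul, Polynomial.eval₂_C,
        Polynomial.eval₂_pow, Polynomial.eval₂_X, hfact i]
  apply hφinj
  rw [hcomp, RingHom.comp_apply]
  have : (ev m (zf m z0 a) : MvPolynomial (Fin r) ℂ →+* Polynomial ℂ) f = 0 := hev
  rw [this, map_zero]


set_option synthInstance.maxHeartbeats 1000000 in
set_option maxHeartbeats 1600000 in
lemma cover (hm : ∀ i, 0 < m i) (hr : 0 < r) {z0 : Fin r → ℂ}
    (hz0 : ∀ i, z0 i ^ m i = (-1 : ℂ) ^ (i : ℕ))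
    {p : Ideal (MvPolynomial (Fin r) ℂ)} (hp : p.IsPrime)
    (hIp : Ideal.span (Sgen r m) ≤ p)
    (hX0 : MvPolynomial.X (⟨0, hr⟩ : Fin r) ∉ p) :
    ∃ a : ∀ i, ZMod (m i), P m (zf m z0 a) ≤ p := by
  haveI := hp
  refine cover_aux hm hr hz0 hp hIp hX0
    (F := AlgebraicClosure (FractionRing (MvPolynomial (Fin r) ℂ ⧸ p)))
    ((algebraMap (FractionRing (MvPolynomial (Fin r) ℂ ⧸ p))
        (AlgebraicClosure (FractionRing (MvPolynomial (Fin r) ℂ ⧸ p)))).comp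
      ((algebraMap (MvPolynomial (Fin r) ℂ ⧸ p)
          (FractionRing (MvPolynomial (Fin r) ℂ ⧸ p))).comp (Ideal.Quotient.mk p))) ?_
  intro f
  constructor
  · intro h
    rw [← Ideal.Quotient.eq_zero_iff_mem]
    apply IsFractionRing.injective (MvPolynomial (Fin r) ℂ ⧸ p)
      (FractionRing (MvPolynomial (Fin r) ℂ ⧸ p))
    rw [map_zero]
    apply (algebraMap (FractionRing (MvPolynomial (Fin r) ℂ ⧸ p))
      (AlgebraicClosure (FractionRing (MvPolynomial (Fin r) ℂ ⧸ p)))).injective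
    rw [map_zero]
    simpa using h
  · intro h
    simp [Ideal.Quotient.eq_zero_iff_mem.mpr h]

lemma z0_ne_zero (hm : ∀ i, 0 < m i) {z0 : Fin r → ℂ}
    (hz0 : ∀ i, z0 i ^ m i = (-1 : ℂ) ^ (i : ℕ)) (i : Fin r) : z0 i ≠ 0 := by
  intro h
  have h2 := hz0 i
  rw [h, zero_pow (hm i).ne'] at h2
  exact pow_ne_zero (i : ℕ) (by norm_num : (-1 : ℂ) ≠ 0) h2.symm

set_option maxHeartbeats 1000000 in
lemma sep (hm : ∀ i, 0 < m i) (hr : 0 < r) {z0 : Fin r → ℂ}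
    (hz0 : ∀ i, z0 i ^ m i = (-1 : ℂ) ^ (i : ℕ)) {a b : ∀ i, ZMod (m i)}
    (hle : P m (zf m z0 a) ≤ P m (zf m z0 b)) :
    b - a ∈ AddSubgroup.zmultiples (fun i => (1 : ZMod (m i))) := by
  classical
  haveI : ∀ i, NeZero (m i) := fun i => ⟨(hm i).ne'⟩
  by_contra hd
  set one : ∀ i, ZMod (m i) := fun i => 1 with hone
  set s : AddSubgroup (∀ i, ZMod (m i)) := AddSubgroup.zmultiples one with hs
  haveI : Finite ((∀ i, ZMod (m i)) ⧸ s) := Quotient.finite _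
  haveI : NeZero ((Monoid.exponent (Multiplicative ((∀ i, ZMod (m i)) ⧸ s)) : ℂ)) :=
    ⟨Nat.cast_ne_zero.mpr Monoid.exponent_ne_zero_of_finite⟩
  have hdQ : (QuotientAddGroup.mk (b - a) : (∀ i, ZMod (m i)) ⧸ s) ≠ 0 := by
    intro h
    exact hd ((QuotientAddGroup.eq_zero_iff _).mp h)
  obtain ⟨χ₀, hχ₀⟩ := CommGroup.exists_apply_ne_one_of_hasEnoughRootsOfUnity
    (Multiplicative ((∀ i, ZMod (m i)) ⧸ s)) ℂ
    (a := Multiplicative.ofAdd (QuotientAddGroup.mk (b - a) : (∀ i, ZMod (m i)) ⧸ s))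
    (fun h => hdQ (ofAdd_eq_one.mp h))
  set χm : Multiplicative (∀ i, ZMod (m i)) →* ℂˣ :=
    χ₀.comp (AddMonoidHom.toMultiplicative (QuotientAddGroup.mk' s)) with hχm
  set χ : (∀ i, ZMod (m i)) → ℂ := fun x => ((χm (Multiplicative.ofAdd x) : ℂˣ) : ℂ) with hχ
  have hχmul : ∀ x y, χ (x + y) = χ x * χ y := by
    intro x y
    rw [hχ]
    show ((χm (Multiplicative.ofAdd (x + y)) : ℂˣ) : ℂ) = _
    rw [ofAdd_add, map_mul, Units.val_mul]
  have hχzero : χ 0 = 1 := by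
    rw [hχ]
    show ((χm (Multiplicative.ofAdd (0 : ∀ i, ZMod (m i))) : ℂˣ) : ℂ) = 1
    rw [ofAdd_zero, map_one, Units.val_one]
  have hχne : ∀ x, χ x ≠ 0 := fun x => Units.ne_zero _
  have hχpow : ∀ (k : ℕ) (y : ∀ i, ZMod (m i)), χ (k • y) = χ y ^ k := by
    intro k y
    induction k with
    | zero => simpa using hχzero
    | succ n ih => rw [succ_nsmul, hχmul, ih, pow_succ]
  have hχd : χ (b - a) ≠ 1 := by
    intro h
    apply hχ₀
    apply Units.ext
    rw [Units.val_one]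
    exact h
  have hχs : χ one = 1 := by
    have hmem : one ∈ s := AddSubgroup.mem_zmultiples one
    have h0 : (QuotientAddGroup.mk' s) one = 0 := (QuotientAddGroup.eq_zero_iff _).mpr hmem
    rw [hχ]
    show ((χ₀ (Multiplicative.ofAdd ((QuotientAddGroup.mk' s) one)) : ℂˣ) : ℂ) = 1
    rw [h0, ofAdd_zero, map_one, Units.val_one]
  set η : Fin r → ℂ := fun i => χ (Pi.single i 1) with hη
  have hsingle_smul : ∀ (i : Fin r) (k : ℕ),
      k • (Pi.single i (1 : ZMod (m i)) : ∀ j, ZMod (m j))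
        = (Pi.single i ((k : ZMod (m i))) : ∀ j, ZMod (m j)) := by
    intro i k
    funext j
    by_cases h : j = i
    · subst h; simp [nsmul_eq_mul]
    · simp [Pi.single_apply, h]
  have hηpow : ∀ i, η i ^ m i = 1 := by
    intro i
    have h2 := hχpow (m i) (Pi.single i (1 : ZMod (m i)))
    rw [hsingle_smul, ZMod.natCast_self, Pi.single_zero, hχzero] at h2
    exact h2.symm
  have hχdecomp : ∀ x : ∀ i, ZMod (m i), χ x = ∏ i, η i ^ (x i).val := by
    intro x
    have hsum : ∀ (t : Finset (Fin r)) (g : Fin r → (∀ i, ZMod (m i))),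
        χ (∑ i ∈ t, g i) = ∏ i ∈ t, χ (g i) := by
      intro t g
      induction t using Finset.induction with
      | empty => simpa using hχzero
      | insert _ _ hnm ih => rw [Finset.sum_insert hnm, hχmul, ih, Finset.prod_insert hnm]
    have hx : χ x = χ (∑ i, Pi.single i (x i)) := by rw [Finset.univ_sum_single x]
    rw [hx, hsum]
    apply Finset.prod_congr rfl
    intro i _
    have h1 : (Pi.single i (x i) : ∀ j, ZMod (m j))
        = (x i).val • (Pi.single i (1 : ZMod (m i)) : ∀ j, ZMod (m j)) := by
      rw [hsingle_smul, ZMod.natCast_rightInverse (x i)]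
    rw [h1, hχpow]
  have hη1 : ∀ i, η i ^ ((1 : ZMod (m i))).val = η i := by
    intro i
    rcases eq_or_ne (m i) 1 with h1 | h1
    · have hz : (Pi.single i (1 : ZMod (m i)) : ∀ j, ZMod (m j)) = 0 := by
        haveI : Subsingleton (ZMod (m i)) := by rw [h1]; infer_instance
        funext j
        by_cases h : j = i
        · subst h; exact Subsingleton.elim _ _
        · simp [Pi.single_apply, h]
      rw [hη]
      show χ (Pi.single i 1) ^ _ = χ (Pi.single i 1)
      rw [hz, hχzero, one_pow]
    · rw [ZMod.val_one'' h1, pow_one]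
  have hprod1 : ∏ i, η i = 1 := by
    have h2 := hχdecomp one
    rw [hχs] at h2
    have h3 : ∀ i : Fin r, (one i) = (1 : ZMod (m i)) := fun i => rfl
    calc ∏ i, η i = ∏ i, η i ^ ((1 : ZMod (m i))).val := by
          apply Finset.prod_congr rfl
          intro i _
          rw [hη1 i]
      _ = 1 := by rw [← h2]
  obtain ⟨ν, hν1, hν2⟩ : ∃ ν : Fin r → ℕ, (∀ i, ν i < m i) ∧ ∀ i, om m i ^ ν i = η i := by
    have h := fun i => (om_prim hm i).eq_pow_of_pow_eq_one (hηpow i)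
    choose ν h1 h2 using h
    exact ⟨ν, h1, h2⟩
  have hsumdvd : LL m ∣ ∑ i, ν i * cc m i := by
    apply ((lam_prim hm).pow_eq_one_iff_dvd _).mp
    calc lam m ^ (∑ i, ν i * cc m i) = ∏ i, lam m ^ (ν i * cc m i) :=
          (Finset.prod_pow_eq_pow_sum _ _ _).symm
      _ = ∏ i, η i := by
          apply Finset.prod_congr rfl
          intro i _
          rw [mul_comm (ν i), pow_mul, lam_pow_cc hm i, hν2 i]
      _ = 1 := hprod1
  obtain ⟨Kq, hKq⟩ := hsumdvd
  -- the separating binomial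
  set f : MvPolynomial (Fin r) ℂ :=
    (∏ i, MvPolynomial.X i ^ ν i)
      - MvPolynomial.C (∏ i, zf m z0 a i ^ ν i)
        * MvPolynomial.X (⟨0, hr⟩ : Fin r) ^ (m ⟨0, hr⟩ * Kq) with hf
  have hev : ∀ x : ∀ i, ZMod (m i), ev m (zf m z0 x) f
      = Polynomial.C ((∏ i, zf m z0 x i ^ ν i) - (∏ i, zf m z0 a i ^ ν i))
        * Polynomial.X ^ (LL m * Kq) := by
    intro x
    have h1 : ev m (zf m z0 x) (∏ i, MvPolynomial.X i ^ ν i)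
        = Polynomial.C (∏ i, zf m z0 x i ^ ν i) * Polynomial.X ^ (∑ i, ν i * cc m i) := by
      rw [map_prod]
      have h2 : ∀ i : Fin r, ev m (zf m z0 x) (MvPolynomial.X i ^ ν i)
          = Polynomial.C (zf m z0 x i ^ ν i) * Polynomial.X ^ (ν i * cc m i) := by
        intro i
        rw [map_pow, ev_X, mul_pow, ← Polynomial.C_pow, ← pow_mul,
          Nat.mul_comm (cc m i) (ν i)]
      calc ∏ i, ev m (zf m z0 x) (MvPolynomial.X i ^ ν i)
          = ∏ i, (Polynomial.C (zf m z0 x i ^ ν i) * Polynomial.X ^ (ν i * cc m i)) := by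
            apply Finset.prod_congr rfl; intro i _; rw [h2 i]
        _ = (∏ i, Polynomial.C (zf m z0 x i ^ ν i)) * ∏ i, Polynomial.X ^ (ν i * cc m i) :=
            Finset.prod_mul_distrib
        _ = Polynomial.C (∏ i, zf m z0 x i ^ ν i) * Polynomial.X ^ (∑ i, ν i * cc m i) := by
            rw [← map_prod, Finset.prod_pow_eq_pow_sum]
    have h3 : ev m (zf m z0 x) (MvPolynomial.X (⟨0, hr⟩ : Fin r) ^ (m ⟨0, hr⟩ * Kq))
        = Polynomial.X ^ (LL m * Kq) := by
      rw [map_pow, ev_X, mul_pow, ← Polynomial.C_pow, ← pow_mul]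
      have h4 : zf m z0 x ⟨0, hr⟩ ^ (m ⟨0, hr⟩ * Kq) = 1 := by
        rw [pow_mul, zf_pow_m hm hz0 x ⟨0, hr⟩]
        norm_num
      rw [h4, Polynomial.C_1, one_mul]
      congr 1
      rw [← mul_assoc, mul_comm (cc m ⟨0, hr⟩), hmc hm]
    rw [hf, map_sub, map_mul, h1, h3]
    have h5 : ev m (zf m z0 x) (MvPolynomial.C (∏ i, zf m z0 a i ^ ν i))
        = Polynomial.C (∏ i, zf m z0 a i ^ ν i) := by
      rw [ev, MvPolynomial.aeval_C, Polynomial.algebraMap_eq]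
    rw [h5, hKq, Polynomial.C_sub]
    ring
  have hfa : f ∈ P m (zf m z0 a) := by
    rw [mem_P, hev a, sub_self, Polynomial.C_0, zero_mul]
  have hfb := hle hfa
  rw [mem_P, hev b] at hfb
  rcases mul_eq_zero.mp hfb with hz | hz
  · have heq : (∏ i, zf m z0 b i ^ ν i) = (∏ i, zf m z0 a i ^ ν i) :=
      sub_eq_zero.mp (Polynomial.C_eq_zero.mp hz)
    -- rewrite both sides via χ
    have hzf : ∀ x : ∀ i, ZMod (m i),
        (∏ i, zf m z0 x i ^ ν i) = (∏ i, z0 i ^ ν i) * χ x := by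
      intro x
      rw [hχdecomp x, ← Finset.prod_mul_distrib]
      apply Finset.prod_congr rfl
      intro i _
      rw [zf, mul_pow, ← hν2 i, ← pow_mul, ← pow_mul, mul_comm ((x i).val)]
    rw [hzf a, hzf b] at heq
    have hz0prod : (∏ i, z0 i ^ ν i) ≠ 0 :=
      Finset.prod_ne_zero_iff.mpr fun i _ => pow_ne_zero _ (z0_ne_zero hm hz0 i)
    have hχab : χ b = χ a := mul_left_cancel₀ hz0prod heq
    have hba : χ (b - a) * χ a = χ a := by
      rw [← hχmul, sub_add_cancel, hχab]
    have : χ (b - a) = 1 := by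
      have := mul_right_cancel₀ (hχne a) (hba.trans (one_mul (χ a)).symm)
      exact this
    exact hχd this
  · exact pow_ne_zero _ Polynomial.X_ne_zero hz

lemma P_zf_mem_minimalPrimes (hm : ∀ i, 0 < m i) (hr : 0 < r) {z0 : Fin r → ℂ}
    (hz0 : ∀ i, z0 i ^ m i = (-1 : ℂ) ^ (i : ℕ)) (a : ∀ i, ZMod (m i)) :
    P m (zf m z0 a) ∈ (Ideal.span (Sgen r m)).minimalPrimes := by
  constructor
  · exact ⟨P_isPrime _, span_le_P hm (Sol_zf hm hz0 a)⟩
  · rintro q ⟨hq, hIq⟩ hqle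
    have hX0q : MvPolynomial.X (⟨0, hr⟩ : Fin r) ∉ q := fun h =>
      X_not_mem_P (zf_ne_zero hm hz0 a ⟨0, hr⟩) (hqle h)
    obtain ⟨b, hb⟩ := cover hm hr hz0 hq hIq hX0q
    have h1 : a - b ∈ AddSubgroup.zmultiples (fun i => (1 : ZMod (m i))) :=
      sep hm hr hz0 (hb.trans hqle)
    have h2 : P m (zf m z0 a) = P m (zf m z0 b) := P_zf_eq_of_sub_mem hm h1
    rw [h2]
    exact hb

lemma minimalPrimes_eq (hm : ∀ i, 0 < m i) (hr : 0 < r) {z0 : Fin r → ℂ}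
    (hz0 : ∀ i, z0 i ^ m i = (-1 : ℂ) ^ (i : ℕ)) :
    (Ideal.span (Sgen r m)).minimalPrimes
      = Set.range (fun a : ∀ i, ZMod (m i) => P m (zf m z0 a)) := by
  apply Set.Subset.antisymm
  · rintro p hp
    obtain ⟨⟨hprime, hIp⟩, hmin⟩ := hp
    by_cases hX0 : MvPolynomial.X (⟨0, hr⟩ : Fin r) ∈ p
    · exfalso
      have hspan : Ideal.span (Set.range (MvPolynomial.X : Fin r → MvPolynomial (Fin r) ℂ))
          ≤ p := by
        rw [Ideal.span_le]
        rintro x ⟨j, rfl⟩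
        exact X_mem_all hm hr hprime hIp hX0 j
      have hP0 : P m (zf m z0 0) ≤ p := (P_le_span_X hm _).trans hspan
      have hple := hmin ⟨P_isPrime _, span_le_P hm (Sol_zf hm hz0 0)⟩ hP0
      exact X_not_mem_P (zf_ne_zero hm hz0 0 ⟨0, hr⟩) (hple hX0)
    · obtain ⟨a, ha⟩ := cover hm hr hz0 hprime hIp hX0
      have hple := hmin ⟨P_isPrime _, span_le_P hm (Sol_zf hm hz0 a)⟩ ha
      exact ⟨a, le_antisymm ha hple⟩
  · rintro _ ⟨a, rfl⟩
    exact P_zf_mem_minimalPrimes hm hr hz0 a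

lemma card_minimalPrimes (hm : ∀ i, 0 < m i) (hr : 0 < r) :
    Nat.card (Ideal.span (Sgen r m)).minimalPrimes * LL m = ∏ i, m i := by
  classical
  haveI : ∀ i, NeZero (m i) := fun i => ⟨(hm i).ne'⟩
  have hex : ∀ i : Fin r, ∃ z : ℂ, z ^ m i = (-1 : ℂ) ^ (i : ℕ) :=
    fun i => IsAlgClosed.exists_pow_nat_eq _ (hm i)
  choose z0 hz0 using hex
  set one : ∀ i, ZMod (m i) := fun i => 1 with hone
  set s : AddSubgroup (∀ i, ZMod (m i)) := AddSubgroup.zmultiples one with hs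
  have hresp : ∀ a b : ∀ i, ZMod (m i),
      (QuotientAddGroup.mk a : _ ⧸ s) = QuotientAddGroup.mk b →
      P m (zf m z0 a) = P m (zf m z0 b) := by
    intro a b hab
    have h1 : b - a ∈ s := by
      have h2 : (-a) + b ∈ s := (QuotientAddGroup.eq (s := s)).mp hab
      rwa [neg_add_eq_sub] at h2
    exact (P_zf_eq_of_sub_mem hm h1).symm
  let Φ : ((∀ i, ZMod (m i)) ⧸ s) → ((Ideal.span (Sgen r m)).minimalPrimes : Set _) :=
    Quotient.lift
      (fun a => (⟨P m (zf m z0 a), P_zf_mem_minimalPrimes hm hr hz0 a⟩ :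
        ((Ideal.span (Sgen r m)).minimalPrimes : Set _)))
      (fun a b hab => Subtype.ext (hresp a b (Quotient.sound hab)))
  have hbij : Function.Bijective Φ := by
    constructor
    · intro x y
      refine QuotientAddGroup.induction_on x (fun a =>
        QuotientAddGroup.induction_on y (fun b hab => ?_))
      have h1 : P m (zf m z0 a) = P m (zf m z0 b) := congrArg Subtype.val hab
      have h2 := sep hm hr hz0 h1.le
      rw [QuotientAddGroup.eq]
      rwa [neg_add_eq_sub]
    · rintro ⟨p, hp⟩
      rw [minimalPrimes_eq hm hr hz0] at hp
      obtain ⟨a, ha⟩ := hp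
      exact ⟨QuotientAddGroup.mk a, Subtype.ext ha⟩
  have hcard1 : Nat.card ((∀ i, ZMod (m i)) ⧸ s)
      = Nat.card (Ideal.span (Sgen r m)).minimalPrimes :=
    Nat.card_congr (Equiv.ofBijective Φ hbij)
  have hlag : Nat.card (∀ i, ZMod (m i)) = Nat.card ((∀ i, ZMod (m i)) ⧸ s) * Nat.card s :=
    AddSubgroup.card_eq_card_quotient_mul_card_addSubgroup s
  have hs_card : Nat.card s = LL m := by
    rw [hs, Nat.card_zmultiples]
    have hdvd1 : addOrderOf one ∣ LL m := by
      apply addOrderOf_dvd_of_nsmul_eq_zero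
      funext i
      show LL m • (one i) = 0
      rw [hone]
      show LL m • (1 : ZMod (m i)) = 0
      rw [nsmul_eq_mul, mul_one, ZMod.natCast_eq_zero_iff]
      exact Finset.dvd_lcm (Finset.mem_univ i)
    have hdvd2 : LL m ∣ addOrderOf one := by
      apply Finset.lcm_dvd
      intro i _
      have h1 := addOrderOf_nsmul_eq_zero one
      have h2 := congrFun h1 i
      have h3 : addOrderOf one • (1 : ZMod (m i)) = 0 := h2
      rwa [nsmul_eq_mul, mul_one, ZMod.natCast_eq_zero_iff] at h3
    exact Nat.dvd_antisymm hdvd1 hdvd2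
  have hprod : Nat.card (∀ i, ZMod (m i)) = ∏ i, m i := by
    rw [Nat.card_pi]
    exact Finset.prod_congr rfl (fun i _ => Nat.card_zmod (m i))
  rw [← hcard1, ← hs_card]
  rw [← hprod, hlag]

end
end ChainedAux


/-- The affine variety in `ℂ^r` defined by the chained system
`x₁^{m₁}+x₂^{m₂} = 0, …, x_{r-1}^{m_{r-1}}+x_r^{m_r} = 0` has exactly
`m₁⋯m_r / lcm(m₁,…,m_r)` irreducible components. -/
theorem card_irreducibleComponents_chained_binomials (r : ℕ) (hr : 2 ≤ r)
    (m : Fin r → ℕ) (hm : ∀ i, 0 < m i) :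
    Nat.card ↥(irreducibleComponents
        ↥(PrimeSpectrum.zeroLocus (R := MvPolynomial (Fin r) ℂ)
          {p | ∃ (i : ℕ) (h : i + 1 < r),
            p = MvPolynomial.X (⟨i, Nat.lt_of_succ_lt h⟩ : Fin r) ^ m ⟨i, Nat.lt_of_succ_lt h⟩
              + MvPolynomial.X (⟨i + 1, h⟩ : Fin r) ^ m ⟨i + 1, h⟩}))
      * Finset.univ.lcm m = ∏ i, m i := by
  have hr0 : 0 < r := lt_of_lt_of_le two_pos hr
  have hset : {p : MvPolynomial (Fin r) ℂ | ∃ (i : ℕ) (h : i + 1 < r),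
      p = MvPolynomial.X (⟨i, Nat.lt_of_succ_lt h⟩ : Fin r) ^ m ⟨i, Nat.lt_of_succ_lt h⟩
        + MvPolynomial.X (⟨i + 1, h⟩ : Fin r) ^ m ⟨i + 1, h⟩} = ChainedAux.Sgen r m := rfl
  rw [hset, ← PrimeSpectrum.zeroLocus_span, ChainedAux.card_irredComp_zeroLocus]
  exact ChainedAux.card_minimalPrimes hm hr0
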